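/- For any matrix X of size m×n with singular value decomposition X = U Σ Vᵀ, and any matrices A of size m×m and B of size m×n with A Aᵀ = I and B Bᵀ = I, the trace of A X Bᵀ is at most the nuclear norm of X (the sum of the singular values of X). -/
import Mathlib


open Matrix BigOperators

/-- Von Neumann trace inequality: for `X = U Σ Vᵀ` an SVD of `X` and any `A`, `B`
with orthonormal rows (`A Aᵀ = I`, `B Bᵀ = I`), `trace (A X Bᵀ) ≤ ‖X‖₊` (nuclear norm,
the sum of the singular values of `X`). -/
theorem von_neumann_trace_inequality
    (m n : ℕ) (X : Matrix (Fin m) (Fin n) ℝ)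
    (U : Matrix (Fin m) (Fin m) ℝ) (V : Matrix (Fin n) (Fin n) ℝ)
    (σ : ℕ → ℝ)
    (hU : U * Uᵀ = 1) (hU' : Uᵀ * U = 1)
    (hV : V * Vᵀ = 1) (hV' : Vᵀ * V = 1)
    (hσ : ∀ i, 0 ≤ σ i)
    (hX : X = U * (Matrix.of fun (i : Fin m) (j : Fin n) =>
      if (i : ℕ) = (j : ℕ) then σ (i : ℕ) else 0) * Vᵀ)
    (A : Matrix (Fin m) (Fin m) ℝ) (B : Matrix (Fin m) (Fin n) ℝ)
    (hA : A * Aᵀ = 1) (hB : B * Bᵀ = 1) :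
    Matrix.trace (A * X * Bᵀ) ≤ ∑ i ∈ Finset.range (min m n), σ i := by
  set S : Matrix (Fin m) (Fin n) ℝ := Matrix.of fun (i : Fin m) (j : Fin n) =>
      if (i : ℕ) = (j : ℕ) then σ (i : ℕ) else 0 with hS
  set P : Matrix (Fin m) (Fin m) ℝ := A * U with hPdef
  set Q : Matrix (Fin m) (Fin n) ℝ := B * V with hQdef
  have hPP' : P * Pᵀ = 1 := by
    rw [hPdef, Matrix.transpose_mul, Matrix.mul_assoc, ← Matrix.mul_assoc U, hU,
      Matrix.one_mul, hA]
  have hPP : Pᵀ * P = 1 := mul_eq_one_comm.mp hPP'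
  have hQQ : Q * Qᵀ = 1 := by
    rw [hQdef, Matrix.transpose_mul, Matrix.mul_assoc, ← Matrix.mul_assoc V, hV,
      Matrix.one_mul, hB]
  -- column norms of P are 1
  have hPcol : ∀ j : Fin m, ∑ l, P l j ^ 2 = 1 := by
    intro j
    have h := congrFun (congrFun hPP j) j
    simpa [Matrix.mul_apply, Matrix.transpose_apply, Matrix.one_apply, sq] using h
  -- column norms of Q are ≤ 1
  have hQcol : ∀ k : Fin n, ∑ l, Q l k ^ 2 ≤ 1 := by
    intro k
    set R : Matrix (Fin n) (Fin n) ℝ := Qᵀ * Q with hR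
    have hRR : R * R = R := by
      rw [hR, Matrix.mul_assoc, ← Matrix.mul_assoc Q, hQQ, Matrix.one_mul]
    have hRsym : Rᵀ = R := by
      rw [hR, Matrix.transpose_mul, Matrix.transpose_transpose]
    have hdiag : R k k = ∑ j, (R k j) ^ 2 := by
      have h := congrFun (congrFun hRR k) k
      rw [Matrix.mul_apply] at h
      rw [← h]
      apply Finset.sum_congr rfl
      intro j _
      have hjk : R j k = R k j := by
        have h2 := congrFun (congrFun hRsym j) k
        simpa [Matrix.transpose_apply] using h2.symm
      rw [hjk, sq]
    have hsq : (R k k) ^ 2 ≤ R k k :=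
      calc (R k k) ^ 2 ≤ ∑ j, (R k j) ^ 2 :=
            Finset.single_le_sum (f := fun j => (R k j) ^ 2)
              (fun j _ => sq_nonneg _) (Finset.mem_univ k)
        _ = R k k := hdiag.symm
    have hQk : R k k = ∑ l, Q l k ^ 2 := by
      simp [hR, Matrix.mul_apply, Matrix.transpose_apply, sq]
    rw [← hQk]
    nlinarith [hsq]
  -- inner products of columns are ≤ 1
  have hMle : ∀ (k : Fin n) (j : Fin m), ∑ l, Q l k * P l j ≤ 1 := by
    intro k j
    have cs := Finset.sum_mul_sq_le_sq_mul_sq Finset.univ (fun l => Q l k) (fun l => P l j)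
    have h1 := hQcol k
    have h2 := hPcol j
    have h3 : (0:ℝ) ≤ ∑ l, Q l k ^ 2 := Finset.sum_nonneg fun l _ => sq_nonneg _
    nlinarith [cs, sq_nonneg (∑ l, Q l k * P l j)]
  -- the trace as a sum
  have hfact : A * X * Bᵀ = P * (S * Qᵀ) := by
    rw [hX, hQdef, hPdef, Matrix.transpose_mul]
    simp only [Matrix.mul_assoc]
  classical
  set f : ℕ → ℝ := fun i =>
    if h : i < m ∧ i < n then σ i * (∑ l, Q l ⟨i, h.2⟩ * P l ⟨i, h.1⟩) else 0 with hf
  have htr : Matrix.trace (A * X * Bᵀ) = ∑ i ∈ Finset.range m, f i := by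
    rw [hfact, Matrix.trace_mul_comm, Matrix.mul_assoc]
    rw [← Fin.sum_univ_eq_sum_range]
    rw [Matrix.trace]
    apply Finset.sum_congr rfl
    intro j _
    rw [Matrix.diag_apply, Matrix.mul_apply]
    by_cases hjn : (j : ℕ) < n
    · have : f (j : ℕ) = σ j * (∑ l, Q l ⟨j, hjn⟩ * P l j) := by
        rw [hf]
        simp only [j.isLt, hjn, and_self, dif_pos]
      rw [this]
      rw [Finset.sum_eq_single (⟨(j : ℕ), hjn⟩ : Fin n)]
      · simp [hS, Matrix.mul_apply, Matrix.transpose_apply, Finset.mul_sum]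
      · intro k _ hk
        have : (j : ℕ) ≠ (k : ℕ) := by
          intro h
          apply hk
          exact Fin.ext h.symm
        simp [hS, this]
      · intro h; exact absurd (Finset.mem_univ _) h
    · have : f (j : ℕ) = 0 := by
        rw [hf]; simp [hjn]
      rw [this]
      apply Finset.sum_eq_zero
      intro k _
      have : (j : ℕ) ≠ (k : ℕ) := by
        intro h; exact hjn (h ▸ k.isLt)
      simp [hS, this]
  rw [htr]
  have hsub : ∑ i ∈ Finset.range m, f i = ∑ i ∈ Finset.range (min m n), f i := by
    symm
    apply Finset.sum_subset
    · apply Finset.range_subset_range.mpr; exact min_le_left m n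
    · intro i hi hni
      simp only [Finset.mem_range] at hi hni
      have : ¬ (i < n) := by omega
      rw [hf]; simp [this]
  rw [hsub]
  apply Finset.sum_le_sum
  intro i hi
  simp only [Finset.mem_range, lt_min_iff] at hi
  rw [hf]
  simp only [hi.1, hi.2, and_self, dif_pos]
  exact mul_le_of_le_one_right (hσ i) (hMle _ _)
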